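/- Let a be a nonzero real number and ω ∈ (0, 2π). Then the symmetric partial sums Σ_{m=−M}^{M} e^{i·m·ω}/(a − i·m) of complex numbers converge, as M → ∞, to (2π/(e^{2π·a} − 1))·e^{a·ω}. -/

import Mathlib

open Complex Filter MeasureTheory intervalIntegral Set Real

noncomputable def Ef (c : ℂ) (s : ℝ) : ℂ := if s = 0 then 1 else (Complex.exp (c * s) - 1) / (c * s)

lemma Ef_factor {c : ℂ} (hc : c ≠ 0) {s : ℝ} (hs : s ≠ 0) :
    Complex.exp (c * s) - 1 = c * s * Ef c s := by
  have hcs : (c : ℂ) * (s : ℂ) ≠ 0 := by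
    exact mul_ne_zero hc (by exact_mod_cast hs)
  simp only [Ef, if_neg hs]
  field_simp
  rw [mul_div_cancel_left₀ _ (by exact_mod_cast hs : (s:ℂ) ≠ 0)]

lemma Ef_cont {c : ℂ} (hc : c ≠ 0) : Continuous (Ef c) := by
  rw [continuous_iff_continuousAt]
  intro x
  by_cases hx : x = 0
  · subst hx
    have h1 : HasDerivAt (fun s : ℝ => Complex.exp (c * s)) c 0 := by
      have hmul : HasDerivAt (fun z : ℂ => c * z) c 0 := by
        simpa using (hasDerivAt_id (0 : ℂ)).const_mul c
      have h0 : HasDerivAt (fun z : ℂ => Complex.exp (c * z)) (Complex.exp (c * 0) * c) 0 :=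
        (Complex.hasDerivAt_exp (c * 0)).comp 0 hmul
      have := h0.comp_ofReal
      simpa using this
    have h2 := hasDerivAt_iff_tendsto_slope.mp h1
    have h3 : Tendsto (fun s : ℝ => (Complex.exp (c * s) - 1) / (c * s)) (nhdsWithin 0 {(0:ℝ)}ᶜ) (nhds 1) := by
      have h2' : Tendsto (fun s : ℝ => c⁻¹ * slope (fun u : ℝ => Complex.exp (c * u)) 0 s)
          (nhdsWithin 0 {(0:ℝ)}ᶜ) (nhds (c⁻¹ * c)) := h2.const_mul c⁻¹
      rw [inv_mul_cancel₀ hc] at h2'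
      apply h2'.congr'
      filter_upwards [self_mem_nhdsWithin] with s hs
      have hs0 : s ≠ 0 := hs
      have hs' : (s : ℂ) ≠ 0 := by exact_mod_cast hs0
      simp only [slope, vsub_eq_sub, sub_zero, Complex.real_smul, Complex.ofReal_inv]
      rw [show ((0:ℝ):ℂ) = 0 by norm_num, mul_zero, Complex.exp_zero]
      field_simp
    have h4 : Tendsto (Ef c) (nhdsWithin 0 {(0:ℝ)}ᶜ) (nhds 1) := by
      apply h3.congr'
      filter_upwards [self_mem_nhdsWithin] with s hs
      have hs' : s ≠ 0 := hs
      simp [Ef, hs']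
    have : ContinuousAt (Ef c) 0 := by
      unfold ContinuousAt
      rw [show Ef c 0 = 1 by simp [Ef]]
      rw [← nhdsNE_sup_pure (0:ℝ), tendsto_sup]
      exact ⟨h4, by simpa [Ef] using tendsto_pure_nhds (Ef c) 0⟩
    exact this
  · have hco : ContinuousAt (fun s : ℝ => (Complex.exp (c * s) - 1) / (c * s)) x := by
      apply ContinuousAt.div
      · fun_prop
      · fun_prop
      · exact mul_ne_zero hc (by exact_mod_cast hx)
    apply hco.congr
    filter_upwards [isOpen_ne.mem_nhds hx] with s hs
    simp [Ef, if_neg hs]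

lemma Ef_I_ne {s : ℝ} (h1 : -(2 * Real.pi) < s) (h2 : s < 2 * Real.pi) : Ef Complex.I s ≠ 0 := by
  rcases eq_or_ne s 0 with rfl | hs
  · simp [Ef]
  · simp only [Ef, if_neg hs]
    apply div_ne_zero
    · intro h
      have hexp : Complex.exp (Complex.I * s) = 1 := by
        rw [sub_eq_zero] at h; exact h
      rw [Complex.exp_eq_one_iff] at hexp
      obtain ⟨n, hn⟩ := hexp
      have hn' : (s : ℂ) * Complex.I = ((n : ℂ) * (2 * (Real.pi : ℂ))) * Complex.I := by
        linear_combination hn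
      have hc : (s : ℂ) = (n : ℂ) * (2 * (Real.pi : ℂ)) :=
        mul_right_cancel₀ Complex.I_ne_zero hn'
      have hr : s = (n : ℝ) * (2 * Real.pi) := by exact_mod_cast hc
      have hlt : ((n : ℝ)) < 1 := by nlinarith [Real.pi_pos]
      have hgt : (-1 : ℝ) < (n : ℝ) := by nlinarith [Real.pi_pos]
      have hn0 : n = 0 := by
        have h1' : (-1 : ℤ) < n := by exact_mod_cast hgt
        have h2' : n < 1 := by exact_mod_cast hlt
        omega
      rw [hn0] at hr
      simp at hr
      exact hs hr
    · exact mul_ne_zero Complex.I_ne_zero (by exact_mod_cast hs)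

lemma geom_symm (z : ℂ) (hz : z ≠ 0) (M : ℕ) :
    (z - 1) * ∑ m ∈ Finset.Icc (-(M:ℤ)) (M:ℤ), z ^ m = z ^ ((M:ℤ) + 1) - z ^ (-(M:ℤ)) := by
  induction M with
  | zero => simp
  | succ n ih =>
    have hset : Finset.Icc (-((n:ℤ)+1)) ((n:ℤ)+1)
        = insert (-((n:ℤ)+1)) (insert ((n:ℤ)+1) (Finset.Icc (-(n:ℤ)) (n:ℤ))) := by
      ext x; simp; omega
    push_cast [hset]
    rw [Finset.sum_insert (by simp only [Finset.mem_insert, Finset.mem_Icc]; omega),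
      Finset.sum_insert (by simp only [Finset.mem_Icc]; omega)]
    rw [mul_add, mul_add, ih]
    have e1 : z ^ (-((n:ℤ)+1)) = z ^ (-(n:ℤ)) * z⁻¹ := by
      rw [show -((n:ℤ)+1) = -(n:ℤ) - 1 by ring, zpow_sub_one₀ hz]
    have e2 : z ^ (((n:ℤ)+1)+1) = z ^ ((n:ℤ)+1) * z := zpow_add_one₀ hz _
    rw [e1, e2]
    have e3 : z ^ (-(n:ℤ)) = z ^ (-(n:ℤ)) * z⁻¹ * z := by
      field_simp
    nth_rewrite 2 [e3]
    ring

lemma int_term (a : ℝ) (ha : a ≠ 0) (ω : ℝ) (m : ℤ) :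
    ∫ t in (0:ℝ)..(2 * Real.pi), Complex.exp (a * t) * Complex.exp (Complex.I * m * (ω - t))
      = Complex.exp (Complex.I * m * ω) * ((Real.exp (2 * Real.pi * a) : ℂ) - 1)
          / ((a : ℂ) - Complex.I * m) := by
  have hc : ((a:ℂ) - Complex.I * m) ≠ 0 := by
    intro h
    have h' := congrArg Complex.re h
    simp [Complex.sub_re, Complex.mul_re] at h'
    exact ha h'
  have h1 : ∀ t : ℝ, Complex.exp (a * t) * Complex.exp (Complex.I * m * (ω - t))
      = Complex.exp (Complex.I * m * ω) * Complex.exp (((a:ℂ) - Complex.I * m) * t) := by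
    intro t
    rw [← Complex.exp_add, ← Complex.exp_add]
    congr 1
    push_cast
    ring
  simp_rw [h1]
  rw [intervalIntegral.integral_const_mul, integral_exp_mul_complex hc]
  have h2 : ((a:ℂ) - Complex.I * m) * ((2 * Real.pi : ℝ) : ℂ)
      = ((2 * Real.pi * a : ℝ) : ℂ) + (-m : ℤ) * (2 * (Real.pi : ℂ) * Complex.I) := by
    push_cast; ring
  rw [h2, Complex.exp_add, Complex.exp_int_mul_two_pi_mul_I]
  rw [show (((0:ℝ)):ℂ) = 0 by norm_num, mul_zero, Complex.exp_zero]
  rw [Complex.ofReal_exp]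
  ring

lemma int_kernel (ω : ℝ) (M : ℕ) :
    (∫ t in (0:ℝ)..(2 * Real.pi),
        (∑ m ∈ Finset.Icc (-(M:ℤ)) (M:ℤ), Complex.exp (Complex.I * m * (ω - t))))
      = 2 * Real.pi := by
  rw [intervalIntegral.integral_finset_sum]
  · rw [Finset.sum_eq_single 0]
    · simp
    · intro m hm hm0
      have hc : (- (Complex.I * m)) ≠ 0 := by
        simp only [neg_ne_zero]
        exact mul_ne_zero Complex.I_ne_zero (by exact_mod_cast hm0)
      have h1 : ∀ t : ℝ, Complex.exp (Complex.I * m * (ω - t))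
          = Complex.exp (Complex.I * m * ω) * Complex.exp ((- (Complex.I * m)) * t) := by
        intro t
        rw [← Complex.exp_add]
        congr 1
        push_cast
        ring
      simp_rw [h1]
      rw [intervalIntegral.integral_const_mul, integral_exp_mul_complex hc]
      have h2 : (- (Complex.I * m)) * ((2 * Real.pi : ℝ) : ℂ)
          = (-m : ℤ) * (2 * (Real.pi : ℂ) * Complex.I) := by push_cast; ring
      rw [h2, Complex.exp_int_mul_two_pi_mul_I]
      rw [show (((0:ℝ)):ℂ) = 0 by norm_num, mul_zero, Complex.exp_zero]
      simp
    · intro h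
      exfalso
      exact h (by simp)
  · intro m _
    apply Continuous.intervalIntegrable
    fun_prop

lemma RL (Q : ℝ → ℂ) :
    Tendsto (fun n : ℝ => ∫ t in (0:ℝ)..(2 * Real.pi), Q t * Complex.exp (-(Complex.I * n * t)))
      (cocompact ℝ) (nhds 0) := by
  set f : ℝ → ℂ := Set.indicator (Set.Ioc (0:ℝ) (2 * Real.pi)) Q with hf
  have hRL := Real.tendsto_integral_exp_smul_cocompact f
  have hφ : Tendsto (fun n : ℝ => n * (2 * Real.pi)⁻¹) (cocompact ℝ) (cocompact ℝ) :=
    (Homeomorph.mulRight₀ ((2 * Real.pi)⁻¹)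
      (by positivity)).toCocompactMap.cocompact_tendsto'
  have hcomp := hRL.comp hφ
  apply hcomp.congr
  intro n
  simp only [Function.comp_apply]
  have hpt : ∀ v : ℝ, (Real.fourierChar (-(v * (n * (2 * Real.pi)⁻¹)))) • f v
      = Set.indicator (Set.Ioc (0:ℝ) (2 * Real.pi))
          (fun t => Q t * Complex.exp (-(Complex.I * n * t))) v := by
    intro v
    by_cases hv : v ∈ Set.Ioc (0:ℝ) (2 * Real.pi)
    · rw [hf, Set.indicator_of_mem hv, Set.indicator_of_mem hv, Circle.smul_def,
        Real.fourierChar_apply]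
      have hπ : (Real.pi : ℂ) ≠ 0 := by exact_mod_cast Real.pi_ne_zero
      have hchar : Complex.exp (((2 * Real.pi * -(v * (n * (2 * Real.pi)⁻¹)) : ℝ) : ℂ)
          * Complex.I) = Complex.exp (-(Complex.I * n * v)) := by
        congr 1
        push_cast
        field_simp
      rw [hchar, smul_eq_mul]
      ring
    · rw [hf, Set.indicator_of_notMem hv, Set.indicator_of_notMem hv, smul_zero]
  rw [intervalIntegral.integral_of_le (by positivity), ← MeasureTheory.integral_indicator
    measurableSet_Ioc]
  exact MeasureTheory.integral_congr_ae (Filter.Eventually.of_forall hpt)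


/-- For a nonzero real `a` and `ω ∈ (0,2π)`, the symmetric partial sums
`Σ_{m=−M}^{M} e^{imω}/(a − im)` converge to `(2π/(e^{2πa} − 1))·e^{aω}`. -/
theorem stmt_14 (a : ℝ) (ha : a ≠ 0) (ω : ℝ) (hω : ω ∈ Set.Ioo (0:ℝ) (2 * Real.pi)) :
    Filter.Tendsto
      (fun Mn : ℕ => ∑ m ∈ Finset.Icc (-(Mn : ℤ)) (Mn : ℤ),
        Complex.exp (Complex.I * (m : ℂ) * (ω : ℂ)) / ((a : ℂ) - Complex.I * (m : ℂ)))
      Filter.atTop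
      (nhds (((2 * Real.pi / (Real.exp (2 * Real.pi * a) - 1)) * Real.exp (a * ω) : ℝ) : ℂ)) := by
  obtain ⟨hω1, hω2⟩ := hω
  have hπ := Real.pi_pos
  have haC : (a : ℂ) ≠ 0 := Complex.ofReal_ne_zero.mpr ha
  -- the constant c = e^{2πa} - 1
  set c : ℂ := ((Real.exp (2 * Real.pi * a) : ℝ) : ℂ) - 1 with hcdef
  have hcR : Real.exp (2 * Real.pi * a) - 1 ≠ 0 := by
    intro h
    have : Real.exp (2 * Real.pi * a) = 1 := by linarith
    rw [Real.exp_eq_one_iff] at this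
    have : a = 0 := by nlinarith
    exact ha this
  have hc : c ≠ 0 := by
    rw [hcdef, sub_ne_zero]
    intro h
    exact hcR (by rw [sub_eq_zero]; exact_mod_cast h)
  -- the function Q
  set Qf : ℝ → ℂ := fun t =>
    Complex.I * a * Complex.exp ((a * ω : ℝ)) * Ef a (t - ω) / Ef Complex.I (ω - t) with hQdef
  have hQcont : ContinuousOn Qf (Set.uIcc 0 (2 * Real.pi)) := by
    rw [Set.uIcc_of_le (by positivity)]
    apply ContinuousOn.div
    · apply Continuous.continuousOn
      exact continuous_const.mul ((Ef_cont haC).comp (continuous_id.sub continuous_const))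
    · exact ((Ef_cont Complex.I_ne_zero).comp (continuous_const.sub continuous_id)).continuousOn
    · intro t ht
      exact Ef_I_ne (by simp at ht ⊢; linarith [ht.2]) (by simp at ht ⊢; linarith [ht.1])
  -- G and Riemann-Lebesgue
  set G : ℝ → ℂ := fun n => ∫ t in (0:ℝ)..(2 * Real.pi),
    Qf t * Complex.exp (-(Complex.I * n * t)) with hGdef
  have hRL : Tendsto G (cocompact ℝ) (nhds 0) := RL Qf
  -- partial sums via integrals
  have hS : ∀ M : ℕ, (∑ m ∈ Finset.Icc (-(M : ℤ)) (M : ℤ),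
      Complex.exp (Complex.I * (m : ℂ) * (ω : ℂ)) / ((a : ℂ) - Complex.I * (m : ℂ)))
      = c⁻¹ * ∫ t in (0:ℝ)..(2 * Real.pi),
          Complex.exp (a * t) * ∑ m ∈ Finset.Icc (-(M : ℤ)) (M : ℤ),
            Complex.exp (Complex.I * m * (ω - t)) := by
    intro M
    have : (∫ t in (0:ℝ)..(2 * Real.pi),
        Complex.exp (a * t) * ∑ m ∈ Finset.Icc (-(M : ℤ)) (M : ℤ),
          Complex.exp (Complex.I * m * (ω - t)))
        = ∑ m ∈ Finset.Icc (-(M : ℤ)) (M : ℤ),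
            Complex.exp (Complex.I * m * ω) * c / ((a : ℂ) - Complex.I * m) := by
      rw [show (fun t : ℝ => Complex.exp (a * t) * ∑ m ∈ Finset.Icc (-(M : ℤ)) (M : ℤ),
          Complex.exp (Complex.I * m * (ω - t)))
          = fun t : ℝ => ∑ m ∈ Finset.Icc (-(M : ℤ)) (M : ℤ),
            Complex.exp (a * t) * Complex.exp (Complex.I * m * (ω - t)) by
        funext t; rw [Finset.mul_sum]]
      rw [intervalIntegral.integral_finset_sum]
      · exact Finset.sum_congr rfl fun m _ => int_term a ha ω m
      · intro m _
        apply Continuous.intervalIntegrable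
        fun_prop
    rw [this, Finset.mul_sum]
    apply Finset.sum_congr rfl
    intro m _
    have : c⁻¹ * (Complex.exp (Complex.I * m * ω) * c / ((a : ℂ) - Complex.I * m))
        = (c⁻¹ * c) * (Complex.exp (Complex.I * m * ω) / ((a : ℂ) - Complex.I * m)) := by ring
    rw [this, inv_mul_cancel₀ hc, one_mul]
  -- key pointwise identity
  have hptid : ∀ M : ℕ, ∀ t ∈ Set.Icc (0:ℝ) (2 * Real.pi), t ≠ ω →
      (Complex.exp (a * t) - Complex.exp ((a * ω : ℝ)))
          * ∑ m ∈ Finset.Icc (-(M : ℤ)) (M : ℤ), Complex.exp (Complex.I * m * (ω - t))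
        = Qf t * (Complex.exp (Complex.I * (((M:ℤ) + 1) : ℤ) * (ω - t))
            - Complex.exp (Complex.I * ((-(M:ℤ)) : ℤ) * (ω - t))) := by
    intro M t ht hne
    set z : ℂ := Complex.exp (Complex.I * ((ω - t : ℝ) : ℂ)) with hzdef
    have hz : z ≠ 0 := Complex.exp_ne_zero _
    have hzm : ∀ k : ℤ, Complex.exp (Complex.I * (k : ℂ) * ((ω : ℂ) - (t : ℂ))) = z ^ k := by
      intro k
      rw [hzdef, ← Complex.exp_int_mul]
      congr 1
      push_cast
      ring
    have hsum : ∑ m ∈ Finset.Icc (-(M : ℤ)) (M : ℤ), Complex.exp (Complex.I * m * (ω - t))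
        = ∑ m ∈ Finset.Icc (-(M : ℤ)) (M : ℤ), z ^ m := by
      apply Finset.sum_congr rfl
      intro m _
      rw [← hzm m]
    have hne' : (t - ω : ℝ) ≠ 0 := sub_ne_zero.mpr hne
    have hne'' : (ω - t : ℝ) ≠ 0 := sub_ne_zero.mpr (Ne.symm hne)
    have hEI : Ef Complex.I (ω - t) ≠ 0 :=
      Ef_I_ne (by simp at ht ⊢; linarith [ht.2]) (by simp at ht ⊢; linarith [ht.1])
    -- factor the exponential difference
    have hfac1 : Complex.exp (a * t) - Complex.exp ((a * ω : ℝ))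
        = Complex.exp ((a * ω : ℝ)) * ((a : ℂ) * ((t - ω : ℝ) : ℂ) * Ef a (t - ω)) := by
      rw [← Ef_factor haC hne']
      rw [mul_sub, mul_one, ← Complex.exp_add]
      congr 2
      push_cast
      ring
    have hfac2 : z - 1 = Complex.I * ((ω - t : ℝ) : ℂ) * Ef Complex.I (ω - t) := by
      rw [← Ef_factor Complex.I_ne_zero hne'', hzdef]
    -- use geometric sum
    have hgeo := geom_symm z hz M
    have hzM1 : Complex.exp (Complex.I * (((M:ℤ) + 1) : ℤ) * (ω - t)) = z ^ ((M:ℤ) + 1) := by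
      rw [← hzm (((M:ℤ) + 1) : ℤ)]
    have hzM2 : Complex.exp (Complex.I * ((-(M:ℤ)) : ℤ) * (ω - t)) = z ^ (-(M:ℤ)) := by
      rw [← hzm ((-(M:ℤ)) : ℤ)]
    rw [hsum, hzM1, hzM2, ← hgeo, hfac1, hfac2, hQdef]
    have hcast : ((t : ℂ) - (ω : ℂ)) = ((t - ω : ℝ) : ℂ) := by push_cast; ring
    have hI2 : Complex.I ^ 2 = -1 := Complex.I_sq
    field_simp
    push_cast
    linear_combination (-(Ef (a:ℂ) (t - ω) * (∑ m ∈ Finset.Icc (-(M:ℤ)) (M:ℤ), z ^ m)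
      * ((ω:ℂ) - (t:ℂ)))) * hI2
  -- integrability
  have hle : (0:ℝ) ≤ 2 * Real.pi := by positivity
  have hQint : ∀ r : ℝ, IntervalIntegrable
      (fun t => Qf t * Complex.exp (-(Complex.I * r * t))) volume 0 (2 * Real.pi) := by
    intro r
    apply ContinuousOn.intervalIntegrable
    exact hQcont.mul (Continuous.continuousOn (by fun_prop))
  -- pointwise exponential splitting
  have hpt2 : ∀ (r t : ℝ), Qf t * Complex.exp (Complex.I * r * ((ω : ℂ) - (t : ℂ)))
      = Complex.exp (Complex.I * r * ω) * (Qf t * Complex.exp (-(Complex.I * r * t))) := by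
    intro r t
    have e : Complex.I * r * ((ω : ℂ) - (t : ℂ))
        = Complex.I * r * ω + (-(Complex.I * r * t)) := by ring
    rw [e, Complex.exp_add]
    ring
  -- the difference integral
  have hdiff : ∀ M : ℕ,
      (∫ t in (0:ℝ)..(2 * Real.pi),
        (Complex.exp (a * t) - Complex.exp ((a * ω : ℝ)))
          * ∑ m ∈ Finset.Icc (-(M : ℤ)) (M : ℤ), Complex.exp (Complex.I * m * (ω - t)))
      = Complex.exp (Complex.I * ((M : ℝ) + 1) * ω) * G ((M : ℝ) + 1)
          - Complex.exp (Complex.I * (-(M : ℝ)) * ω) * G (-(M : ℝ)) := by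
    intro M
    have hcast1 : ((((M : ℤ) + 1) : ℤ) : ℂ) = (((M : ℝ) + 1 : ℝ) : ℂ) := by push_cast; ring
    have hcast2 : (((-(M : ℤ)) : ℤ) : ℂ) = ((-(M : ℝ) : ℝ) : ℂ) := by push_cast; ring
    have h1 : (∫ t in (0:ℝ)..(2 * Real.pi),
        (Complex.exp (a * t) - Complex.exp ((a * ω : ℝ)))
          * ∑ m ∈ Finset.Icc (-(M : ℤ)) (M : ℤ), Complex.exp (Complex.I * m * (ω - t)))
        = ∫ t in (0:ℝ)..(2 * Real.pi),
            (Complex.exp (Complex.I * (((M : ℝ) + 1 : ℝ) : ℂ) * ω)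
              * (Qf t * Complex.exp (-(Complex.I * (((M : ℝ) + 1 : ℝ) : ℂ) * t)))
            - Complex.exp (Complex.I * ((-(M : ℝ) : ℝ) : ℂ) * ω)
              * (Qf t * Complex.exp (-(Complex.I * ((-(M : ℝ) : ℝ) : ℂ) * t)))) := by
      apply intervalIntegral.integral_congr_ae
      have hae : ∀ᵐ t : ℝ, t ≠ ω := by
        refine ae_iff.mpr ?_
        simpa using measure_singleton ω
      filter_upwards [hae] with t hta htb
      rw [Set.uIoc_of_le hle] at htb
      have ht' : t ∈ Set.Icc (0:ℝ) (2 * Real.pi) := Set.Ioc_subset_Icc_self htb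
      rw [hptid M t ht' hta, mul_sub, hcast1, hcast2, hpt2, hpt2]
    rw [h1, intervalIntegral.integral_sub ((hQint _).const_mul _) ((hQint _).const_mul _),
      intervalIntegral.integral_const_mul, intervalIntegral.integral_const_mul, hGdef]
    push_cast
    ring
  -- tendsto of frequencies to cocompact
  have h1T : Tendsto (fun M : ℕ => ((M : ℝ) + 1)) atTop (cocompact ℝ) := by
    rw [cocompact_eq_atBot_atTop]
    exact Tendsto.mono_right
      (tendsto_atTop_add_const_right _ 1 tendsto_natCast_atTop_atTop) le_sup_right
  have h2T : Tendsto (fun M : ℕ => (-(M : ℝ))) atTop (cocompact ℝ) := by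
    rw [cocompact_eq_atBot_atTop]
    exact Tendsto.mono_right
      (tendsto_neg_atTop_atBot.comp tendsto_natCast_atTop_atTop) le_sup_left
  have GA : Tendsto (fun M : ℕ => G ((M : ℝ) + 1)) atTop (nhds 0) := hRL.comp h1T
  have GB : Tendsto (fun M : ℕ => G (-(M : ℝ))) atTop (nhds 0) := hRL.comp h2T
  -- the error term tends to zero
  have hzero : Tendsto (fun M : ℕ => c⁻¹ *
      (Complex.exp (Complex.I * ((M : ℝ) + 1) * ω) * G ((M : ℝ) + 1)
        - Complex.exp (Complex.I * (-(M : ℝ)) * ω) * G (-(M : ℝ)))) atTop (nhds 0) := by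
    have hb : Tendsto (fun M : ℕ => ‖c⁻¹‖ * (‖G ((M : ℝ) + 1)‖ + ‖G (-(M : ℝ))‖)) atTop
        (nhds (‖c⁻¹‖ * (‖(0:ℂ)‖ + ‖(0:ℂ)‖))) :=
      tendsto_const_nhds.mul ((GA.norm).add (GB.norm))
    simp only [norm_zero, add_zero, mul_zero] at hb
    apply squeeze_zero_norm _ hb
    intro M
    have e1 : ∀ r : ℝ, ‖Complex.exp (Complex.I * (r : ℂ) * (ω : ℂ))‖ = 1 := by
      intro r
      rw [show Complex.I * (r : ℂ) * (ω : ℂ) = ((r * ω : ℝ) : ℂ) * Complex.I by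
        push_cast; ring]
      rw [Complex.norm_exp_ofReal_mul_I]
    have e1' : ‖Complex.exp (Complex.I * ((((M:ℝ)):ℂ) + 1) * (ω:ℂ))‖ = 1 := by
      rw [show Complex.I * ((((M:ℝ)):ℂ) + 1) * (ω:ℂ)
          = Complex.I * (((M:ℝ) + 1 : ℝ) : ℂ) * (ω:ℂ) by push_cast; ring]
      exact e1 _
    have e2' : ‖Complex.exp (Complex.I * (-(((M:ℝ)):ℂ)) * (ω:ℂ))‖ = 1 := by
      rw [show Complex.I * (-(((M:ℝ)):ℂ)) * (ω:ℂ)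
          = Complex.I * ((-(M:ℝ) : ℝ) : ℂ) * (ω:ℂ) by push_cast; ring]
      exact e1 _
    rw [norm_mul]
    apply mul_le_mul_of_nonneg_left _ (norm_nonneg _)
    refine (norm_sub_le _ _).trans ?_
    rw [norm_mul, norm_mul, e1', e2', one_mul, one_mul]
  -- split off the constant part of the integral
  have hsplit : ∀ M : ℕ,
      (∫ t in (0:ℝ)..(2 * Real.pi),
        Complex.exp (a * t) * ∑ m ∈ Finset.Icc (-(M : ℤ)) (M : ℤ),
          Complex.exp (Complex.I * m * (ω - t)))
      = Complex.exp ((a * ω : ℝ)) * (2 * Real.pi)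
        + ∫ t in (0:ℝ)..(2 * Real.pi),
            (Complex.exp (a * t) - Complex.exp ((a * ω : ℝ)))
              * ∑ m ∈ Finset.Icc (-(M : ℤ)) (M : ℤ),
                Complex.exp (Complex.I * m * (ω - t)) := by
    intro M
    have hcont : Continuous (fun t : ℝ => ∑ m ∈ Finset.Icc (-(M : ℤ)) (M : ℤ),
        Complex.exp (Complex.I * m * (ω - t))) := by
      apply continuous_finset_sum
      intro m _
      fun_prop
    have hi1 : IntervalIntegrable (fun t : ℝ =>
        Complex.exp (a * t) * ∑ m ∈ Finset.Icc (-(M : ℤ)) (M : ℤ),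
          Complex.exp (Complex.I * m * (ω - t))) volume 0 (2 * Real.pi) :=
      (Continuous.mul (by fun_prop) hcont).intervalIntegrable _ _
    have hi2 : IntervalIntegrable (fun t : ℝ =>
        Complex.exp ((a * ω : ℝ)) * ∑ m ∈ Finset.Icc (-(M : ℤ)) (M : ℤ),
          Complex.exp (Complex.I * m * (ω - t))) volume 0 (2 * Real.pi) :=
      (Continuous.mul continuous_const hcont).intervalIntegrable _ _
    have hsub : (∫ t in (0:ℝ)..(2 * Real.pi),
        (Complex.exp (a * t) - Complex.exp ((a * ω : ℝ)))
          * ∑ m ∈ Finset.Icc (-(M : ℤ)) (M : ℤ), Complex.exp (Complex.I * m * (ω - t)))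
        = (∫ t in (0:ℝ)..(2 * Real.pi),
            Complex.exp (a * t) * ∑ m ∈ Finset.Icc (-(M : ℤ)) (M : ℤ),
              Complex.exp (Complex.I * m * (ω - t)))
          - ∫ t in (0:ℝ)..(2 * Real.pi),
              Complex.exp ((a * ω : ℝ)) * ∑ m ∈ Finset.Icc (-(M : ℤ)) (M : ℤ),
                Complex.exp (Complex.I * m * (ω - t)) := by
      rw [← intervalIntegral.integral_sub hi1 hi2]
      apply intervalIntegral.integral_congr
      intro t _
      ring
    rw [hsub, intervalIntegral.integral_const_mul, int_kernel]
    ring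
  -- identify the limit constant
  have hc' : Complex.exp (((2 * Real.pi * a : ℝ) : ℂ)) - 1 ≠ 0 := by
    rw [← Complex.ofReal_exp]
    exact hcdef ▸ hc
  have hT : (((2 * Real.pi / (Real.exp (2 * Real.pi * a) - 1)) * Real.exp (a * ω) : ℝ) : ℂ)
      = c⁻¹ * (Complex.exp ((a * ω : ℝ)) * (2 * Real.pi)) := by
    rw [hcdef]
    push_cast [Complex.ofReal_exp]
    field_simp
  -- final identity
  have hfinal : ∀ M : ℕ, (∑ m ∈ Finset.Icc (-(M : ℤ)) (M : ℤ),
      Complex.exp (Complex.I * (m : ℂ) * (ω : ℂ)) / ((a : ℂ) - Complex.I * (m : ℂ)))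
      = (((2 * Real.pi / (Real.exp (2 * Real.pi * a) - 1)) * Real.exp (a * ω) : ℝ) : ℂ)
        + c⁻¹ * (Complex.exp (Complex.I * ((M : ℝ) + 1) * ω) * G ((M : ℝ) + 1)
            - Complex.exp (Complex.I * (-(M : ℝ)) * ω) * G (-(M : ℝ))) := by
    intro M
    rw [hS M, hsplit M, mul_add, hdiff M, hT]
  have hlim := (tendsto_const_nhds
    (x := (((2 * Real.pi / (Real.exp (2 * Real.pi * a) - 1)) * Real.exp (a * ω) : ℝ) : ℂ))
    (f := (atTop : Filter ℕ))).add hzero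
  rw [add_zero] at hlim
  exact hlim.congr (fun M => (hfinal M).symm)
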